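/- If ψ : ℝ → ℝ is differentiable on [s,t] with ψ(s)=0, ψ(t)=1, 0 ≤ ψ(u) ≤ 1 for all u ∈ [s,t], and ψ'(u) ≤ a₀ + a₁ ψ(u) + a₂ ψ(u)² for all u ∈ [s,t], where a₀, a₁, a₂ > 0, then t - s ≥ ∫₀¹ 1/(a₀ + a₁ r + a₂ r²) dr. -/

import Mathlib

open Set intervalIntegral

/-- if `ψ` is differentiable on `[s,t]` with `ψ s = 0`, `ψ t = 1`,
`0 ≤ ψ ≤ 1` on `[s,t]`, and `ψ' ≤ a₀ + a₁ ψ + a₂ ψ²` on `[s,t]` with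
`a₀, a₁, a₂ > 0`, then `t - s ≥ ∫₀¹ 1/(a₀ + a₁ r + a₂ r²) dr`. -/
theorem dwell_time_lower_bound
    (s t : ℝ) (hst : s < t)
    (a₀ a₁ a₂ : ℝ) (ha₀ : 0 < a₀) (ha₁ : 0 < a₁) (ha₂ : 0 < a₂)
    (ψ ψ' : ℝ → ℝ)
    (hderiv : ∀ u ∈ Set.Icc s t, HasDerivAt ψ (ψ' u) u)
    (hψs : ψ s = 0) (hψt : ψ t = 1)
    (hbound : ∀ u ∈ Set.Icc s t, 0 ≤ ψ u ∧ ψ u ≤ 1)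
    (hineq : ∀ u ∈ Set.Icc s t, ψ' u ≤ a₀ + a₁ * ψ u + a₂ * (ψ u) ^ 2) :
    t - s ≥ ∫ r in (0 : ℝ)..1, 1 / (a₀ + a₁ * r + a₂ * r ^ 2) := by
  set g : ℝ → ℝ := fun r => a₀ + a₁ * r + a₂ * r ^ 2 with hg_def
  have hgpos : ∀ x : ℝ, 0 ≤ x → 0 < g x := by
    intro x hx
    simp only [hg_def]
    nlinarith
  have hgcont : Continuous g := by continuity
  set F : ℝ → ℝ := fun x => ∫ r in (0:ℝ)..x, 1 / g r with hF_def
  have hF : ∀ x : ℝ, 0 ≤ x → HasDerivAt F (1 / g x) x := by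
    intro x hx
    apply intervalIntegral.integral_hasDerivAt_right
    · apply ContinuousOn.intervalIntegrable
      intro r hr
      rw [Set.uIcc_of_le hx] at hr
      exact (continuousAt_const.div hgcont.continuousAt
        (hgpos r hr.1).ne').continuousWithinAt
    · exact (measurable_const.div hgcont.measurable).stronglyMeasurable.stronglyMeasurableAtFilter
    · exact continuousAt_const.div hgcont.continuousAt (hgpos x hx).ne'
  set φ : ℝ → ℝ := fun u => u - F (ψ u) with hφ_def
  set φ' : ℝ → ℝ := fun u => 1 - 1 / g (ψ u) * ψ' u with hφ'_def
  have hφderiv : ∀ u ∈ Set.Icc s t, HasDerivAt φ (φ' u) u := by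
    intro u hu
    have hψu := (hbound u hu).1
    have h1 : HasDerivAt (fun v => F (ψ v)) (1 / g (ψ u) * ψ' u) u :=
      (hF (ψ u) hψu).comp u (hderiv u hu)
    exact (hasDerivAt_id' (x := u)).sub h1
  have hmono : MonotoneOn φ (Set.Icc s t) := by
    apply monotoneOn_of_deriv_nonneg (convex_Icc s t)
    · exact fun u hu => (hφderiv u hu).continuousAt.continuousWithinAt
    · intro u hu
      rw [interior_Icc] at hu
      exact (hφderiv u (Set.mem_Icc_of_Ioo hu)).differentiableAt.differentiableWithinAt
    · intro u hu
      rw [interior_Icc] at hu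
      have hu' : u ∈ Set.Icc s t := Set.mem_Icc_of_Ioo hu
      rw [(hφderiv u hu').deriv]
      have hgψ : 0 < g (ψ u) := hgpos _ (hbound u hu').1
      have := hineq u hu'
      have : 1 / g (ψ u) * ψ' u ≤ 1 := by
        rw [one_div, inv_mul_le_iff₀ hgψ, mul_one]
        simpa [hg_def] using this
      simp only [hφ'_def]
      linarith
  have key : φ s ≤ φ t :=
    hmono (Set.left_mem_Icc.mpr hst.le) (Set.right_mem_Icc.mpr hst.le) hst.le
  have hF0 : F 0 = 0 := by simp [hF_def]
  have hF1 : F 1 = ∫ r in (0:ℝ)..1, 1 / (a₀ + a₁ * r + a₂ * r ^ 2) := rfl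
  simp only [hφ_def, hψs, hψt, hF0, sub_zero] at key
  rw [hF1] at key
  linarith
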